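/- For every natural number k and real α > 1, letting y = (α − α^{−1})/2, the sum of |r_j| y^j over the coefficients r_j of the Chebyshev polynomial T_k equals (α^k + (−1)^k α^{−k})/2. -/

import Mathlib

open Polynomial Complex

noncomputable def Qc : ℕ → Polynomial ℝ
  | 0 => 1
  | 1 => X
  | (n+2) => 2 * X * Qc (n+1) + Qc n

lemma Qc_coeff_nonneg : ∀ n j, 0 ≤ (Qc n).coeff j := by
  intro n
  induction n using Nat.twoStepInduction with
  | zero => intro j; rw [Qc]; rcases j with _|j <;> simp [coeff_one]
  | one => intro j; rw [Qc]; simp [coeff_X]; split <;> norm_num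
  | more n ih1 ih2 =>
    intro j
    have h2 : (2:ℝ[X]) = C 2 := (map_ofNat C 2).symm
    rw [Qc, coeff_add, mul_assoc, h2, coeff_C_mul]
    rcases j with _|j
    · simpa using ih1 0
    · rw [coeff_X_mul]
      have := ih1 (j+1); have := ih2 j; linarith

lemma Qc_natDegree_le : ∀ n, (Qc n).natDegree ≤ n := by
  intro n
  induction n using Nat.twoStepInduction with
  | zero => rw [Qc]; simp
  | one => rw [Qc]; simp [natDegree_X_le]
  | more n ih1 ih2 =>
    rw [Qc]
    refine le_trans (natDegree_add_le _ _) ?_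
    simp only [sup_le_iff]
    constructor
    · refine le_trans (natDegree_mul_le) ?_
      have : (2 * X : ℝ[X]).natDegree ≤ 1 := by
        refine le_trans (natDegree_mul_le) ?_
        simp [natDegree_X_le]
      omega
    · omega

lemma T_coeff_add_two (n j : ℕ) :
    (Polynomial.Chebyshev.T ℝ (n+2 : ℕ)).coeff j =
      2 * (Polynomial.Chebyshev.T ℝ (n+1 : ℕ)).coeff (j-1) * (if j = 0 then 0 else 1)
        - (Polynomial.Chebyshev.T ℝ (n : ℕ)).coeff j := by
  have h : ((n+2 : ℕ) : ℤ) = (n : ℤ) + 2 := by push_cast; ring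
  have h1 : ((n+1 : ℕ) : ℤ) = (n : ℤ) + 1 := by push_cast; ring
  rw [h, Polynomial.Chebyshev.T_add_two, coeff_sub, ← h1]
  have h2 : (2:ℝ[X]) = C 2 := (map_ofNat C 2).symm
  rw [mul_assoc, h2, coeff_C_mul]
  rcases j with _|j
  · simp [mul_comm]
  · simp [coeff_X_mul, mul_assoc]

lemma key (n j : ℕ) :
    (I:ℂ)^j * ((Polynomial.Chebyshev.T ℝ n).coeff j : ℂ)
      = (I:ℂ)^n * ((Qc n).coeff j : ℂ) := by
  induction n using Nat.twoStepInduction generalizing j with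
  | zero =>
    rw [Qc]
    simp only [Polynomial.Chebyshev.T_zero, Nat.cast_zero, pow_zero, one_mul]
    rcases j with _|j <;> simp [coeff_one]
  | one =>
    rw [Qc]
    show (I:ℂ)^j * ((Polynomial.Chebyshev.T ℝ (1:ℤ)).coeff j : ℂ) = _
    rw [Polynomial.Chebyshev.T_one]
    rcases j with _|_|j <;> simp [coeff_X]
  | more n ih1 ih2 =>
    rw [T_coeff_add_two, Qc]
    have hq : ((2 * X * Qc (n+1) + Qc n).coeff j)
        = 2 * (Qc (n+1)).coeff (j-1) * (if j = 0 then 0 else 1) + (Qc n).coeff j := by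
      have h2 : (2:ℝ[X]) = C 2 := (map_ofNat C 2).symm
      rw [coeff_add, mul_assoc, h2, coeff_C_mul]
      rcases j with _|j
      · simp [mul_comm]
      · simp [coeff_X_mul, mul_assoc]
    rw [hq]
    have hI : (I:ℂ)^(n+2) = -(I:ℂ)^n := by
      rw [pow_add, Complex.I_sq]; ring
    rcases j with _|j
    · have h2 := ih1 0
      push_cast at h2 ⊢
      linear_combination -h2 - (((Qc n).coeff 0 : ℝ) : ℂ) * hI
    · have h1 := ih2 j
      have h2 := ih1 (j+1)
      push_cast at h1 h2 ⊢
      linear_combination 2 * I * h1 - h2 - (((Qc n).coeff (j+1) : ℝ) : ℂ) * hI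

lemma abs_T_coeff (n j : ℕ) :
    |(Polynomial.Chebyshev.T ℝ n).coeff j| = (Qc n).coeff j := by
  have h := congrArg (fun z : ℂ => ‖z‖) (key n j)
  simpa [_root_.abs_of_nonneg (Qc_coeff_nonneg n j)] using h

lemma Qc_eval (α : ℝ) (hα : 1 < α) :
    ∀ n, (Qc n).eval ((α - α⁻¹)/2) = (α ^ n + (-1 : ℝ) ^ n * α⁻¹ ^ n) / 2 := by
  have hα0 : α ≠ 0 := by positivity
  have hβ : α * α⁻¹ = 1 := mul_inv_cancel₀ hα0
  intro n
  induction n using Nat.twoStepInduction with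
  | zero => rw [Qc]; norm_num
  | one => rw [Qc]; simp; ring
  | more n ih1 ih2 =>
    rw [Qc]
    simp only [eval_add, eval_mul, eval_ofNat, eval_X, ih1, ih2]
    have e1 : (-1:ℝ)^(n+1) = -(-1:ℝ)^n := by ring
    have e2 : (-1:ℝ)^(n+2) = (-1:ℝ)^n := by ring
    rw [e1, e2]
    linear_combination (-(α^n + (-1)^n * α⁻¹^n)/2) * hβ

theorem chebyshev_weighted_coeff_norm (k : ℕ) (α : ℝ) (hα : 1 < α) :
    ∑ j ∈ Finset.range (k + 1),
        |(Polynomial.Chebyshev.T ℝ k).coeff j| * ((α - α⁻¹) / 2) ^ j =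
      (α ^ k + (-1 : ℝ) ^ k * α⁻¹ ^ k) / 2 := by
  have hd : (Qc k).natDegree < k + 1 := Nat.lt_succ_of_le (Qc_natDegree_le k)
  calc ∑ j ∈ Finset.range (k + 1),
        |(Polynomial.Chebyshev.T ℝ k).coeff j| * ((α - α⁻¹) / 2) ^ j
      = ∑ j ∈ Finset.range (k + 1), (Qc k).coeff j * ((α - α⁻¹) / 2) ^ j := by
        refine Finset.sum_congr rfl fun j _ => ?_
        rw [abs_T_coeff]
    _ = (Qc k).eval ((α - α⁻¹)/2) := (eval_eq_sum_range' hd _).symm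
    _ = _ := Qc_eval α hα k
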